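/- arXiv:1902.03915 — 5 statements merged into one kernel-verified Lean document; each statement's English description precedes it below -/
import Mathlib

section
/- Ekeland's variational principle, free form: Let X be a complete metric space and let f : X → [0,∞] be a potential with supp(f) ≠ ∅. Then for every real ε > 0, f has an ε-critical point; that is, there exists x* ∈ X with f(x*) < ∞ such that for every y ∈ X, if f(y) + ε·d(x*, y) ≤ f(x*) then y = x*. -/
open ENNReal

/-- An `ε`-critical point of a potential `f : X → [0,∞]`: a point of the support of `f`
such that `f y + ε·d(x,y) ≤ f x` implies `y = x`. -/
def IsCritPt {X : Type*} [MetricSpace X] (f : X → ℝ≥0∞) (ε : ℝ) (x : X) : Prop :=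
  f x ≠ ⊤ ∧ ∀ y : X, f y + ENNReal.ofReal ε * edist x y ≤ f x → y = x

private lemma ekeland_step {X : Type*} [MetricSpace X] (f : X → ℝ≥0∞) (c : ℝ≥0∞)
    (n : ℕ) (p : X) (hp : f p ≠ ⊤) :
    ∃ q : X, (f q + c * edist p q ≤ f p) ∧
      (∀ y : X, f y + c * edist p y ≤ f p → f q ≤ f y + 2⁻¹ ^ n) := by
  set m : ℝ≥0∞ := ⨅ (y : X) (_ : f y + c * edist p y ≤ f p), f y with hm
  have hpS : f p + c * edist p p ≤ f p := by simp
  have hmle : m ≤ f p := by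
    refine le_trans (iInf_le _ p) ?_
    exact iInf_le _ hpS
  have hmt : m ≠ ⊤ := fun h => hp (top_le_iff.mp (h ▸ hmle))
  have hpow : (2⁻¹ : ℝ≥0∞) ^ n ≠ 0 := by
    simp [pow_ne_zero]
  have hlt : m < m + 2⁻¹ ^ n := ENNReal.lt_add_right hmt hpow
  -- find q in the sublevel set with f q < m + 2⁻¹ ^ n
  have : ∃ q : X, (f q + c * edist p q ≤ f p) ∧ f q < m + 2⁻¹ ^ n := by
    by_contra h
    push_neg at h
    have : m + 2⁻¹ ^ n ≤ m := by
      rw [hm]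
      refine le_iInf fun y => le_iInf fun hy => h y hy
    exact absurd hlt (not_lt.mpr this)
  obtain ⟨q, hq1, hq2⟩ := this
  refine ⟨q, hq1, fun y hy => ?_⟩
  have hmy : m ≤ f y := le_trans (iInf_le _ y) (iInf_le _ hy)
  exact le_trans hq2.le (add_le_add_left hmy _)

/-- Ekeland's variational principle, free form. -/
theorem ekeland_free_variational_principle {X : Type*} [MetricSpace X] [CompleteSpace X]
    (f : X → ℝ≥0∞) (hf : LowerSemicontinuous f) (hsupp : ∃ x, f x ≠ ⊤)
    (ε : ℝ) (hε : 0 < ε) :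
    ∃ x : X, IsCritPt f ε x := by
  obtain ⟨x0, hx0⟩ := hsupp
  set c : ℝ≥0∞ := ENNReal.ofReal ε with hc
  have hc0 : c ≠ 0 := by simp [hc, hε, hε.le]
  have hct : c ≠ ⊤ := ENNReal.ofReal_ne_top
  choose g hg1 hg2 using ekeland_step f c
  -- recursively defined sequence in the subtype of points with finite value
  have hfin : ∀ (n : ℕ) (p : X) (hp : f p ≠ ⊤), f (g n p hp) ≠ ⊤ := by
    intro n p hp
    have := hg1 n p hp
    intro ht
    rw [ht] at this
    simp at this
    exact hp this
  let v : ℕ → {p : X // f p ≠ ⊤} := fun n =>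
    Nat.rec ⟨x0, hx0⟩ (fun n p => ⟨g n p.1 p.2, hfin n p.1 p.2⟩) n
  let u : ℕ → X := fun n => (v n).1
  have hu0 : u 0 = x0 := rfl
  have hut : ∀ n, f (u n) ≠ ⊤ := fun n => (v n).2
  have hstep : ∀ n, f (u (n + 1)) + c * edist (u n) (u (n + 1)) ≤ f (u n) :=
    fun n => hg1 n (u n) (hut n)
  have hmin : ∀ n y, f y + c * edist (u n) y ≤ f (u n) → f (u (n + 1)) ≤ f y + 2⁻¹ ^ n :=
    fun n => hg2 n (u n) (hut n)
  -- chain inequality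
  have hchain : ∀ n m, n ≤ m → f (u m) + c * edist (u n) (u m) ≤ f (u n) := by
    intro n m hnm
    induction m with
    | zero =>
      obtain rfl : n = 0 := Nat.le_zero.mp hnm
      simp
    | succ m ih =>
      rcases Nat.lt_or_ge n (m + 1) with h | h
      · have hnm' : n ≤ m := Nat.lt_succ_iff.mp h
        have h1 := ih hnm'
        calc f (u (m + 1)) + c * edist (u n) (u (m + 1))
            ≤ f (u (m + 1)) + c * (edist (u n) (u m) + edist (u m) (u (m + 1))) := by
              gcongr; exact edist_triangle _ _ _
          _ = (f (u (m + 1)) + c * edist (u m) (u (m + 1))) + c * edist (u n) (u m) := by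
              ring
          _ ≤ f (u m) + c * edist (u n) (u m) := by gcongr; exact hstep m
          _ ≤ f (u n) := h1
      · obtain rfl : n = m + 1 := le_antisymm hnm h
        simp
  -- telescoping bound on partial sums
  have hsum : ∀ n, (∑ k ∈ Finset.range n, c * edist (u k) (u (k + 1))) + f (u n) ≤ f x0 := by
    intro n
    induction n with
    | zero => simp [hu0]
    | succ n ih =>
      rw [Finset.sum_range_succ]
      calc (∑ k ∈ Finset.range n, c * edist (u k) (u (k + 1)))
            + c * edist (u n) (u (n + 1)) + f (u (n + 1))
          = (∑ k ∈ Finset.range n, c * edist (u k) (u (k + 1)))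
            + (f (u (n + 1)) + c * edist (u n) (u (n + 1))) := by ring
        _ ≤ (∑ k ∈ Finset.range n, c * edist (u k) (u (k + 1))) + f (u n) := by
            gcongr; exact hstep n
        _ ≤ f x0 := ih
  have htsum : (∑' k, c * edist (u k) (u (k + 1))) ≤ f x0 := by
    rw [ENNReal.tsum_eq_iSup_nat]
    exact iSup_le fun n => le_trans (le_add_right le_rfl) (hsum n)
  have htsum' : (∑' k, edist (u k) (u (k + 1))) ≠ ⊤ := by
    intro h
    rw [ENNReal.tsum_mul_left, h, ENNReal.mul_top hc0] at htsum
    exact hx0 (top_le_iff.mp htsum)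
  have hcauchy : CauchySeq u :=
    cauchySeq_of_edist_le_of_tsum_ne_top _ (fun n => le_rfl) htsum'
  obtain ⟨x, hx⟩ := cauchySeq_tendsto_of_complete hcauchy
  -- the limit belongs to all the sublevel sets
  have hxS : ∀ n, f x + c * edist (u n) x ≤ f (u n) := by
    intro n
    by_contra h
    push_neg at h
    -- lower semicontinuity of y ↦ f y + c * edist (u n) y
    have hlsc : LowerSemicontinuous (fun y => f y + c * edist (u n) y) := by
      apply hf.add
      exact (Continuous.lowerSemicontinuous (ENNReal.continuous_const_mul hct |>.comp (continuous_const.edist continuous_id)))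
    have := hlsc x (f (u n)) h
    have hev := hx.eventually this
    obtain ⟨m, hm⟩ := ((hev.and (Filter.eventually_ge_atTop n)).exists)
    exact absurd (hchain n m hm.2) (not_le.mpr hm.1)
  have hxt : f x ≠ ⊤ := by
    intro h
    have := hxS 0
    rw [h] at this
    simp at this
    rw [hu0] at this
    exact hx0 this
  refine ⟨x, hxt, fun y hy => ?_⟩
  -- y is in all sublevel sets
  have hyS : ∀ n, f y + c * edist (u n) y ≤ f (u n) := by
    intro n
    calc f y + c * edist (u n) y
        ≤ f y + c * (edist x y + edist (u n) x) := by
          gcongr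
          calc edist (u n) y ≤ edist (u n) x + edist x y := edist_triangle _ _ _
            _ = edist x y + edist (u n) x := add_comm _ _
      _ = (f y + c * edist x y) + c * edist (u n) x := by ring
      _ ≤ f x + c * edist (u n) x := by gcongr
      _ ≤ f (u n) := hxS n
  have hyt : f y ≠ ⊤ := by
    intro h
    rw [h] at hy
    simp at hy
    exact hxt hy
  -- key estimate : c * edist x y ≤ 2⁻¹ ^ n for all n
  have hkey : ∀ n : ℕ, c * edist x y ≤ 2⁻¹ ^ n := by
    intro n
    have h1 : f (u (n + 1)) ≤ f y + 2⁻¹ ^ n := hmin n y (hyS n)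
    have h2 : f x ≤ f (u (n + 1)) := le_trans (le_add_right le_rfl) (hxS (n + 1))
    have h3 : f y + c * edist x y ≤ f y + 2⁻¹ ^ n :=
      le_trans hy (le_trans h2 h1)
    exact (ENNReal.add_le_add_iff_left hyt).mp h3
  have hzero : c * edist x y = 0 := by
    by_contra h
    obtain ⟨n, hn⟩ := ENNReal.exists_inv_two_pow_lt h
    exact absurd (hkey n) (not_le.mpr hn)
  have : edist x y = 0 := by
    rcases mul_eq_zero.mp hzero with h | h
    · exact absurd h hc0
    · exact h
  exact (edist_eq_zero.mp this).symm
end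

section
/- Let X be a metric space, let 0 < α < β be reals, let f : X → [0,∞] be a potential with supp(f) ≠ ∅, and suppose g : X → ℝ is a continuous function with g ≥ 0 such that g(x) = inf_{y ∈ X} (f(y) + β·d(x,y)) for every x ∈ X (the infimum taken in [0,∞] and finite). If x* ∈ X is an α-critical point of g, then f(x*) = g(x*) (so in particular f(x*) < ∞) and x* is an α-critical point of f. -/
open ENNReal

/-- An `ε`-critical point of a real-valued function `g : X → ℝ`. -/
def IsCritPtReal {X : Type*} [MetricSpace X] (g : X → ℝ) (ε : ℝ) (x : X) : Prop :=
  ∀ y : X, g y + ε * dist x y ≤ g x → y = x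

/-- If `g` is the continuous lower `β`-envelope of a potential `f` and `x*` is an `α`-critical
point of `g` for some `0 < α < β`, then `f x* = g x*` and `x*` is an `α`-critical point of `f`. -/
theorem envelope_critical_point {X : Type*} [MetricSpace X]
    (α β : ℝ) (hα : 0 < α) (hαβ : α < β)
    (f : X → ℝ≥0∞) (hf : LowerSemicontinuous f) (hsupp : ∃ x, f x ≠ ⊤)
    (g : X → ℝ) (hg : Continuous g) (hg0 : ∀ x, 0 ≤ g x)
    (hginf : ∀ x : X, (⨅ y : X, f y + ENNReal.ofReal β * edist x y) = ENNReal.ofReal (g x))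
    (x : X) (hcrit : IsCritPtReal g α x) :
    f x = ENNReal.ofReal (g x) ∧ IsCritPt f α x := by
  have hβ : (0:ℝ) ≤ β := le_of_lt (hα.trans hαβ)
  have hmul : ∀ (c : ℝ), 0 ≤ c → ∀ (y z : X), ENNReal.ofReal c * edist y z =
      ENNReal.ofReal (c * dist y z) := by
    intro c hc y z
    rw [edist_dist, ← ENNReal.ofReal_mul hc]
  -- g ≤ f pointwise
  have hgle : ∀ y : X, ENNReal.ofReal (g y) ≤ f y := by
    intro y
    rw [← hginf y]
    calc (⨅ z : X, f z + ENNReal.ofReal β * edist y z)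
        ≤ f y + ENNReal.ofReal β * edist y y := iInf_le _ y
      _ = f y := by simp
  have hle : ENNReal.ofReal (g x) ≤ f x := hgle x
  -- main claim : f x = g x
  have hfx : f x = ENNReal.ofReal (g x) := by
    by_contra hne
    have hlt : ENNReal.ofReal (g x) < f x := lt_of_le_of_ne hle (Ne.symm hne)
    obtain ⟨r, hr0, hr1, hr2⟩ := ENNReal.lt_iff_exists_real_btwn.mp hlt
    have hrgx : g x < r := by
      by_contra h
      push_neg at h
      exact absurd (ENNReal.ofReal_le_ofReal h) (not_le_of_gt hr1)
    -- lower semicontinuity gives a ball where f > r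
    have hlsc := hf x (ENNReal.ofReal r) hr2
    rw [Metric.eventually_nhds_iff] at hlsc
    obtain ⟨ρ, hρ0, hball⟩ := hlsc
    -- choose ε
    set ε : ℝ := min ((r - g x) / 2) ((β - α) * ρ) with hεdef
    have hε0 : 0 < ε := lt_min (by linarith) (by nlinarith)
    -- find y with f y + β d(x,y) < g x + ε
    have hinf_lt : (⨅ y : X, f y + ENNReal.ofReal β * edist x y)
        < ENNReal.ofReal (g x + ε) := by
      rw [hginf x]
      exact ENNReal.ofReal_lt_ofReal_iff (by linarith [hg0 x]) |>.mpr (by linarith)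
    obtain ⟨y, hy⟩ := iInf_lt_iff.mp hinf_lt
    rw [hmul β hβ x y] at hy
    set d : ℝ := dist x y with hd
    have hd0 : 0 ≤ d := dist_nonneg
    -- y is outside the ball
    have hdρ : ρ ≤ d := by
      by_contra h
      push_neg at h
      have hfy : ENNReal.ofReal r < f y := hball (by rwa [dist_comm])
      have : ENNReal.ofReal r < ENNReal.ofReal (g x + ε) :=
        lt_of_le_of_lt (le_trans hfy.le le_self_add) hy
      have : r < g x + ε := by
        by_contra h2
        push_neg at h2
        exact absurd (ENNReal.ofReal_le_ofReal h2) (not_le_of_gt this)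
      have hεle : ε ≤ (r - g x) / 2 := min_le_left _ _
      linarith
    -- get the real inequality g y + β d < g x + ε
    have hgyd : g y + β * d < g x + ε := by
      have h1 : ENNReal.ofReal (g y + β * d) < ENNReal.ofReal (g x + ε) := by
        rw [ENNReal.ofReal_add (hg0 y) (by positivity)]
        exact lt_of_le_of_lt (add_le_add_left (hgle y) _) hy
      by_contra h2
      push_neg at h2
      exact absurd (ENNReal.ofReal_le_ofReal h2) (not_le_of_gt h1)
    -- criticality of g gives y = x, contradiction
    have hεle : ε ≤ (β - α) * ρ := min_le_right _ _
    have : g y + α * d ≤ g x := by nlinarith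
    have hyx : y = x := hcrit y this
    rw [hyx] at hd
    simp only [dist_self] at hd
    linarith [hd ▸ hdρ]
  refine ⟨hfx, hfx ▸ ENNReal.ofReal_ne_top, ?_⟩
  intro y hy
  rw [hfx, hmul α hα.le x y] at hy
  have h1 : ENNReal.ofReal (g y + α * dist x y) ≤ ENNReal.ofReal (g x) := by
    rw [ENNReal.ofReal_add (hg0 y) (by positivity)]
    exact le_trans (add_le_add_left (hgle y) _) hy
  exact hcrit y ((ENNReal.ofReal_le_ofReal_iff (hg0 x)).mp h1)
end

section
/- Let X be a complete separable metric space. Suppose the free variational principle holds on X, i.e., every potential g on X with supp(g) ≠ ∅ has, for every ε > 0, an ε-critical point. Then the localized variational principle holds on X: for every potential f on X, every ε > 0, and every x₀ ∈ supp(f), there is an ε-critical point x* of f with f(x*) + ε·d(x₀, x*) ≤ f(x₀). -/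
open ENNReal

/-- On a complete separable metric space, the free variational principle implies the localized
variational principle. -/
theorem FVP_implies_LVP {X : Type*} [MetricSpace X] [CompleteSpace X]
    [TopologicalSpace.SeparableSpace X]
    (hFVP : ∀ g : X → ℝ≥0∞, LowerSemicontinuous g → (∃ x, g x ≠ ⊤) →
      ∀ ε : ℝ, 0 < ε → ∃ x : X, IsCritPt g ε x) :
    ∀ f : X → ℝ≥0∞, LowerSemicontinuous f → ∀ ε : ℝ, 0 < ε → ∀ x₀ : X, f x₀ ≠ ⊤ →
      ∃ x : X, IsCritPt f ε x ∧ f x + ENNReal.ofReal ε * edist x₀ x ≤ f x₀ := by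
  intro f hf ε hε x₀ hx₀
  set ε' := ENNReal.ofReal ε with hε'
  set S : Set X := {y | f y + ε' * edist x₀ y ≤ f x₀} with hSdef
  have hlsc : LowerSemicontinuous fun y => f y + ε' * edist x₀ y :=
    hf.add (((ENNReal.continuous_const_mul ENNReal.ofReal_ne_top).comp
      (continuous_const.edist continuous_id)).lowerSemicontinuous)
  have hSclosed : IsClosed S := hlsc.isClosed_preimage (f x₀)
  -- the localized potential
  set g : X → ℝ≥0∞ := fun y => f y + Sᶜ.indicator (fun _ => ⊤) y with hgdef
  have hg_mem : ∀ y ∈ S, g y = f y := by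
    intro y hy
    simp [hgdef, Set.indicator_of_notMem (by simpa using hy : y ∉ Sᶜ)]
  have hg_not_mem : ∀ y ∉ S, g y = ⊤ := by
    intro y hy
    simp [hgdef, Set.indicator_of_mem (by simpa using hy : y ∈ Sᶜ)]
  have hglsc : LowerSemicontinuous g :=
    hf.add (hSclosed.isOpen_compl.lowerSemicontinuous_indicator zero_le)
  have hx₀S : x₀ ∈ S := by
    simp only [hSdef, Set.mem_setOf_eq, edist_self, mul_zero, add_zero, le_refl]
  have hgx₀ : g x₀ = f x₀ := hg_mem x₀ hx₀S
  obtain ⟨x, hxtop, hxcrit⟩ := hFVP g hglsc ⟨x₀, by rw [hgx₀]; exact hx₀⟩ ε hε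
  have hxS : x ∈ S := by
    by_contra h
    exact hxtop (hg_not_mem x h)
  have hgx : g x = f x := hg_mem x hxS
  have hfx : f x ≠ ⊤ := by rwa [hgx] at hxtop
  refine ⟨x, ⟨hfx, ?_⟩, hxS⟩
  intro y hy
  have hyS : y ∈ S := by
    have h1 : f y + ε' * edist x₀ y ≤ (f y + ε' * edist x y) + ε' * edist x₀ x := by
      calc f y + ε' * edist x₀ y ≤ f y + ε' * (edist x₀ x + edist x y) := by
            gcongr; exact edist_triangle _ _ _
        _ = (f y + ε' * edist x y) + ε' * edist x₀ x := by ring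
    exact le_trans h1 (le_trans (by gcongr) hxS)
  exact hxcrit y (by rwa [hg_mem y hyS, hgx])
end

section
/- Let X and Z be complete metric spaces such that Z is an X-pseudofibration of [0,∞) (the nonnegative reals with the Euclidean metric). Suppose the localized variational principle holds on Z for continuous potentials, i.e., for every continuous g : Z → ℝ with g ≥ 0, every ε > 0, and every z₀ ∈ Z, there is an ε-critical point z* of g with g(z*) + ε·d(z₀, z*) ≤ g(z₀). Then the free variational principle holds on X: every potential f on X with supp(f) ≠ ∅ has, for every ε > 0, an ε-critical point. -/
open ENNReal
open scoped NNReal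
open scoped Topology Filter

/-- `Z` is an `X`-pseudofibration of `Y` if there are a closed isometry `ι : X × Y → Z`
(with `X × Y` carrying the max metric, the default product metric) and a continuous
`π : Z → Y` which is distance non-increasing and satisfies `π (ι (x, y)) = y`. -/
def IsPseudofibration (X Y Z : Type*) [MetricSpace X] [MetricSpace Y] [MetricSpace Z] : Prop :=
  ∃ (ι : X × Y → Z) (π : Z → Y),
    Isometry ι ∧ IsClosed (Set.range ι) ∧ Continuous π ∧
      (∀ z z' : Z, dist (π z) (π z') ≤ dist z z') ∧ ∀ (x : X) (y : Y), π (ι (x, y)) = y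

/-- If `Z` is an `X`-pseudofibration of `[0,∞)` and the localized variational principle holds
on `Z` for continuous potentials, then the free variational principle holds on `X`. -/
theorem LVP_pseudofibration_implies_FVP {X Z : Type*}
    [MetricSpace X] [CompleteSpace X] [MetricSpace Z] [CompleteSpace Z]
    (hfib : IsPseudofibration X ℝ≥0 Z)
    (hLVP : ∀ g : Z → ℝ, Continuous g → (∀ z, 0 ≤ g z) →
      ∀ ε : ℝ, 0 < ε → ∀ z₀ : Z,
        ∃ z : Z, IsCritPtReal g ε z ∧ g z + ε * dist z₀ z ≤ g z₀) :
    ∀ f : X → ℝ≥0∞, LowerSemicontinuous f → (∃ x, f x ≠ ⊤) →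
      ∀ ε : ℝ, 0 < ε → ∃ x : X, IsCritPt f ε x := by
  intro f hf hne ε hε
  obtain ⟨x₀, hx₀⟩ := hne
  obtain ⟨ι, π, hι, hrange, hπc, hπlip, hπι⟩ := hfib
  set E : Set (X × ℝ≥0) := {p | f p.1 ≤ (p.2 : ℝ≥0∞)} with hE
  have hEclosed : IsClosed E := by
    rw [← isOpen_compl_iff, isOpen_iff_mem_nhds]
    rintro ⟨x, t⟩ hp
    simp only [Set.mem_compl_iff, Set.mem_setOf_eq, not_le, hE] at hp
    obtain ⟨q, hq1, hq2⟩ := exists_between hp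
    have hU : ∀ᶠ x' in 𝓝 x, q < f x' := hf x q hq2
    have hV : ∀ᶠ t' : ℝ≥0 in 𝓝 t, (t' : ℝ≥0∞) < q := by
      have : Continuous fun t' : ℝ≥0 => (t' : ℝ≥0∞) := ENNReal.continuous_coe
      exact this.continuousAt.eventually_lt continuousAt_const hq1
    rw [nhds_prod_eq]
    filter_upwards [hU.prod_inl (𝓝 t), hV.prod_inr (𝓝 x)] with p h1 h2
    simp only [Set.mem_compl_iff, Set.mem_setOf_eq, not_le, hE]
    exact h2.trans h1
  have hx₀E : (x₀, (f x₀).toNNReal) ∈ E := by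
    simp only [hE, Set.mem_setOf_eq, ENNReal.coe_toNNReal hx₀, le_refl]
  set C : Set Z := ι '' E with hC
  have hCclosed : IsClosed C := by
    have hemb : Topology.IsClosedEmbedding ι := ⟨hι.isEmbedding, hrange⟩
    exact hemb.isClosedMap E hEclosed
  have hCne : C.Nonempty := ⟨_, Set.mem_image_of_mem ι hx₀E⟩
  set g : Z → ℝ := fun z => (π z : ℝ) + 2 * Metric.infDist z C with hg
  have hgc : Continuous g :=
    (NNReal.continuous_coe.comp hπc).add (continuous_const.mul (Metric.continuous_infDist_pt C))
  have hgnn : ∀ z, 0 ≤ g z := fun z =>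
    add_nonneg (π z).coe_nonneg (mul_nonneg (by norm_num) (Metric.infDist_nonneg))
  set ε' : ℝ := min ε (1/2) with hε'def
  have hε'pos : 0 < ε' := lt_min hε (by norm_num)
  have hε'le : ε' ≤ ε := min_le_left _ _
  have hε'half : ε' ≤ 1/2 := min_le_right _ _
  obtain ⟨zs, hcrit, -⟩ := hLVP g hgc hgnn ε' hε'pos (ι (x₀, (f x₀).toNNReal))
  -- zs ∈ C
  have hzsC : zs ∈ C := by
    by_contra hout
    have hD : 0 < Metric.infDist zs C := (hCclosed.notMem_iff_infDist_pos hCne).mp hout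
    obtain ⟨w, hwC, hwd⟩ := (Metric.infDist_lt_iff hCne).mp
      (show Metric.infDist zs C < (5/4) * Metric.infDist zs C by linarith)
    have hgw : g w = (π w : ℝ) := by
      simp [hg, Metric.infDist_zero_of_mem hwC]
    have hπw : (π w : ℝ) ≤ (π zs : ℝ) + dist zs w := by
      have h1 := hπlip w zs
      rw [NNReal.dist_eq] at h1
      have h2 := abs_le.mp h1
      rw [dist_comm] at h1 ⊢
      cases abs_le.mp h1 with
      | intro hl hr => linarith
    have : g w + ε' * dist zs w ≤ g zs := by
      have hd0 : 0 ≤ dist zs w := dist_nonneg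
      have : g zs = (π zs : ℝ) + 2 * Metric.infDist zs C := rfl
      rw [hgw, this]
      nlinarith [hε'half, hε'pos]
    have := hcrit w this
    exact hout (this ▸ hwC)
  obtain ⟨⟨xs, ts⟩, hpE, hins⟩ := hzsC
  have hπzs : π zs = ts := by rw [← hins, hπι]
  have hgzs : g zs = (ts : ℝ) := by
    simp [hg, hπzs, Metric.infDist_zero_of_mem (hins ▸ Set.mem_image_of_mem ι hpE : zs ∈ C)]
  -- key transfer
  have hkey : ∀ (y : X) (s : ℝ≥0), (y, s) ∈ E →
      (s : ℝ) + ε' * dist ((xs, ts) : X × ℝ≥0) (y, s) ≤ (ts : ℝ) → (y, s) = (xs, ts) := by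
    intro y s hyE hle
    have hgy : g (ι (y, s)) = (s : ℝ) := by
      simp [hg, hπι, Metric.infDist_zero_of_mem (Set.mem_image_of_mem ι hyE)]
      exact Metric.infDist_zero_of_mem (Set.mem_image_of_mem ι hyE)
    have hdist : dist zs (ι (y, s)) = dist ((xs, ts) : X × ℝ≥0) (y, s) := by
      rw [← hins, hι.dist_eq]
    have := hcrit (ι (y, s)) (by rw [hgy, hdist, hgzs]; exact hle)
    rw [← hins] at this
    exact hι.injective this
  -- f xs ≤ ts, hence finite
  have hfxs : f xs ≤ (ts : ℝ≥0∞) := hpE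
  have hfxs_ne : f xs ≠ ⊤ := fun h => by simp [h] at hfxs
  -- ts = (f xs).toNNReal
  have hts : (ts : ℝ≥0∞) = f xs := by
    set s : ℝ≥0 := (f xs).toNNReal with hs
    have hsle : s ≤ ts := by
      rw [hs, ← ENNReal.coe_le_coe, ENNReal.coe_toNNReal hfxs_ne]
      exact hfxs
    have hsle' : (s : ℝ) ≤ (ts : ℝ) := by exact_mod_cast hsle
    have hsE : (xs, s) ∈ E := by
      simp only [hE, Set.mem_setOf_eq, hs, ENNReal.coe_toNNReal hfxs_ne, le_refl]
    have hdist : dist ((xs, ts) : X × ℝ≥0) (xs, s) = (ts : ℝ) - s := by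
      rw [Prod.dist_eq]
      simp only [dist_self, NNReal.dist_eq]
      rw [abs_of_nonneg (by linarith)]
      exact max_eq_right (by linarith)
    have := hkey xs s hsE (by
      rw [hdist]
      nlinarith [hε'half, hε'pos])
    have : s = ts := (Prod.mk.injEq _ _ _ _ ▸ this).2
    rw [← this, hs, ENNReal.coe_toNNReal hfxs_ne]
  refine ⟨xs, hfxs_ne, ?_⟩
  intro y hy
  rw [← hts] at hy
  have hfy_ne : f y ≠ ⊤ := by
    intro h
    rw [h, top_add] at hy
    exact ENNReal.coe_ne_top (top_le_iff.mp hy)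
  set s : ℝ≥0 := (f y).toNNReal with hs
  have hsE : (y, s) ∈ E := by
    simp only [hE, Set.mem_setOf_eq, hs, ENNReal.coe_toNNReal hfy_ne, le_refl]
  -- real inequality: s + ε * dist xs y ≤ ts
  have hreal : (s : ℝ) + ε * dist xs y ≤ (ts : ℝ) := by
    have h1 : ((s : ℝ≥0∞) + ENNReal.ofReal (ε * dist xs y)) ≤ (ts : ℝ≥0∞) := by
      rw [ENNReal.ofReal_mul hε.le, ← edist_dist, hs, ENNReal.coe_toNNReal hfy_ne]
      exact hy
    have h2 := ENNReal.toReal_mono ENNReal.coe_ne_top h1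
    rw [ENNReal.toReal_add ENNReal.coe_ne_top ENNReal.ofReal_ne_top,
      ENNReal.toReal_ofReal (mul_nonneg hε.le dist_nonneg)] at h2
    simpa using h2
  have hsle : (s : ℝ) ≤ (ts : ℝ) := by nlinarith [dist_nonneg (x := xs) (y := y), hε]
  have hdle : dist ((xs, ts) : X × ℝ≥0) (y, s) = max (dist xs y) ((ts : ℝ) - s) := by
    rw [Prod.dist_eq, NNReal.dist_eq, abs_of_nonneg (by linarith : (0:ℝ) ≤ (ts:ℝ) - s)]
  have := hkey y s hsE (by
    rw [hdle]
    have hd : 0 ≤ dist xs y := dist_nonneg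
    have hmax : ε' * max (dist xs y) ((ts : ℝ) - s) ≤ (ts : ℝ) - s := by
      rw [mul_max_of_nonneg _ _ hε'pos.le]
      apply max_le
      · nlinarith
      · nlinarith
    linarith)
  exact (Prod.mk.injEq _ _ _ _ ▸ this).1
end

section
/- Let X be a complete separable metric space that admits a closed isometry into C([0,1]), and let Y ⊆ ℝ be a closed interval containing more than one point (i.e., Y = [a,b] with a < b reals, or Y = [a,∞), or Y = (−∞,b], or Y = ℝ, each with the Euclidean metric). Then C([0,1]) is an X-pseudofibration of Y: there exist a closed isometry ι : X × Y → C([0,1]) (X × Y carrying the max metric) and a continuous map π : C([0,1]) → Y such that d(π(g), π(h)) ≤ d(g, h) for all g, h ∈ C([0,1]) and π(ι(x, y)) = y for all (x, y) ∈ X × Y. -/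
open ENNReal

/-- The weight function `u(t) = max 0 (1 - 2t)`. -/
noncomputable def pfWeight (t : unitInterval) : ℝ := max 0 (1 - 2 * (t : ℝ))

lemma pfWeight_nonneg (t : unitInterval) : 0 ≤ pfWeight t := le_max_left _ _

lemma pfWeight_le_one (t : unitInterval) : pfWeight t ≤ 1 :=
  max_le zero_le_one (by nlinarith [t.2.1])

lemma continuous_pfWeight : Continuous pfWeight :=
  continuous_const.max (by fun_prop)

/-- The reparametrization `σ(t) = projIcc 0 1 (2t - 1)`. -/
noncomputable def pfRepar (t : unitInterval) : unitInterval :=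
  Set.projIcc 0 1 zero_le_one (2 * (t : ℝ) - 1)

lemma continuous_pfRepar : Continuous pfRepar :=
  continuous_projIcc.comp (by fun_prop)

/-- A 1-Lipschitz retraction onto a closed interval. -/
lemma exists_retract (Y : Set ℝ)
    (hY : (∃ a b : ℝ, a < b ∧ Y = Set.Icc a b) ∨ (∃ a : ℝ, Y = Set.Ici a) ∨
      (∃ b : ℝ, Y = Set.Iic b) ∨ Y = Set.univ) :
    IsClosed Y ∧ ∃ r : ℝ → Y, LipschitzWith 1 r ∧ ∀ y : Y, r (y : ℝ) = y := by
  rcases hY with ⟨a, b, hab, rfl⟩ | ⟨a, rfl⟩ | ⟨b, rfl⟩ | rfl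
  · exact ⟨isClosed_Icc, Set.projIcc a b hab.le, LipschitzWith.projIcc hab.le,
      fun y => Set.projIcc_val hab.le y⟩
  · refine ⟨isClosed_Ici, fun t => ⟨max a t, Set.mem_Ici.mpr (le_max_left _ _)⟩, ?_, ?_⟩
    · refine LipschitzWith.of_dist_le_mul fun s t => ?_
      simp only [Subtype.dist_eq, Real.dist_eq, NNReal.coe_one, one_mul]
      calc |max a s - max a t| ≤ max |a - a| |s - t| := abs_max_sub_max_le_max a s a t
        _ = |s - t| := by simp
    · intro y
      exact Subtype.ext (max_eq_right y.2)
  · refine ⟨isClosed_Iic, fun t => ⟨min b t, Set.mem_Iic.mpr (min_le_left _ _)⟩, ?_, ?_⟩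
    · refine LipschitzWith.of_dist_le_mul fun s t => ?_
      simp only [Subtype.dist_eq, Real.dist_eq, NNReal.coe_one, one_mul]
      calc |min b s - min b t| ≤ max |b - b| |s - t| := abs_min_sub_min_le_max b s b t
        _ = |s - t| := by simp
    · intro y
      exact Subtype.ext (min_eq_right y.2)
  · refine ⟨isClosed_univ, fun t => ⟨t, Set.mem_univ t⟩, ?_, fun y => Subtype.ext rfl⟩
    exact LipschitzWith.of_dist_le_mul fun s t => by simp [Subtype.dist_eq]

/-- If a complete separable metric space `X` admits a closed isometry into `C([0,1])` and
`Y ⊆ ℝ` is a closed interval with more than one point, then `C([0,1])` (with the supremum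
metric) is an `X`-pseudofibration of `Y`. -/
theorem C01_isPseudofibration {X : Type*} [MetricSpace X] [CompleteSpace X]
    [TopologicalSpace.SeparableSpace X]
    (hembed : ∃ j : X → C(unitInterval, ℝ), Isometry j ∧ IsClosed (Set.range j))
    (Y : Set ℝ)
    (hY : (∃ a b : ℝ, a < b ∧ Y = Set.Icc a b) ∨ (∃ a : ℝ, Y = Set.Ici a) ∨
      (∃ b : ℝ, Y = Set.Iic b) ∨ Y = Set.univ) :
    IsPseudofibration X Y C(unitInterval, ℝ) := by
  obtain ⟨j, hj, -⟩ := hembed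
  obtain ⟨hYc, r, hr, hry⟩ := exists_retract Y hY
  haveI : CompleteSpace Y := hYc.completeSpace_coe
  -- the isometry
  set ι : X × Y → C(unitInterval, ℝ) := fun p =>
    ⟨fun t => pfWeight t * (p.2 : ℝ) + (1 - pfWeight t) * j p.1 (pfRepar t), by
      refine (continuous_pfWeight.mul continuous_const).add
        ((continuous_const.sub continuous_pfWeight).mul ?_)
      exact (j p.1).continuous.comp continuous_pfRepar⟩ with hι
  have hval : ∀ (p : X × Y) (t : unitInterval),
      ι p t = pfWeight t * (p.2 : ℝ) + (1 - pfWeight t) * j p.1 (pfRepar t) := fun _ _ => rfl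
  -- value at 0 is y
  have hw0 : pfWeight 0 = 1 := by simp [pfWeight]
  have hι0 : ∀ p : X × Y, ι p 0 = (p.2 : ℝ) := by
    intro p; rw [hval, hw0]; ring
  -- for s in [0,1], at t = (s+1)/2 we recover j x at s
  have hmem : ∀ s : unitInterval, ((s : ℝ) + 1) / 2 ∈ Set.Icc (0:ℝ) 1 := by
    intro s; constructor <;> nlinarith [s.2.1, s.2.2]
  have hι1 : ∀ (p : X × Y) (s : unitInterval),
      ι p ⟨((s : ℝ) + 1) / 2, hmem s⟩ = j p.1 s := by
    intro p s
    have hw : pfWeight ⟨((s : ℝ) + 1) / 2, hmem s⟩ = 0 := by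
      simp only [pfWeight]
      rw [max_eq_left (by nlinarith [s.2.1])]
    have hs : pfRepar ⟨((s : ℝ) + 1) / 2, hmem s⟩ = s := by
      simp only [pfRepar]
      have : 2 * (((s : ℝ) + 1) / 2) - 1 = (s : ℝ) := by ring
      rw [this]
      exact Set.projIcc_val zero_le_one s
    rw [hval, hw, hs]; ring
  have hiso : Isometry ι := by
    apply Isometry.of_dist_eq
    intro p q
    rw [Prod.dist_eq]
    apply le_antisymm
    · rw [ContinuousMap.dist_le (le_max_of_le_left dist_nonneg)]
      intro t
      have h1 : dist (j p.1 (pfRepar t)) (j q.1 (pfRepar t)) ≤ dist p.1 q.1 := by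
        calc dist (j p.1 (pfRepar t)) (j q.1 (pfRepar t)) ≤ dist (j p.1) (j q.1) :=
              ContinuousMap.dist_apply_le_dist _
          _ = dist p.1 q.1 := hj.dist_eq _ _
      have h2 : dist (p.2 : ℝ) (q.2 : ℝ) = dist p.2 q.2 := (Subtype.dist_eq _ _).symm
      rw [hval, hval, Real.dist_eq]
      have hu0 := pfWeight_nonneg t
      have hu1 := pfWeight_le_one t
      set u := pfWeight t
      set A := (p.2 : ℝ) - (q.2 : ℝ) with hA
      set B := j p.1 (pfRepar t) - j q.1 (pfRepar t) with hB
      set M := max (dist p.1 q.1) (dist p.2 q.2) with hM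
      have hd1 : |A| ≤ M := by
        rw [hA, ← Real.dist_eq, h2]; exact le_max_right _ _
      have hd2 : |B| ≤ M := by
        rw [hB, ← Real.dist_eq]; exact h1.trans (le_max_left _ _)
      have e1 : |u * A| = u * |A| := by rw [abs_mul, abs_of_nonneg hu0]
      have e2 : |(1 - u) * B| = (1 - u) * |B| := by
        rw [abs_mul, abs_of_nonneg (by linarith : (0:ℝ) ≤ 1 - u)]
      have hdiff : u * (p.2 : ℝ) + (1 - u) * j p.1 (pfRepar t) -
          (u * (q.2 : ℝ) + (1 - u) * j q.1 (pfRepar t)) = u * A + (1 - u) * B := by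
        rw [hA, hB]; ring
      rw [hdiff]
      calc |u * A + (1 - u) * B| ≤ |u * A| + |(1 - u) * B| := abs_add_le _ _
        _ = u * |A| + (1 - u) * |B| := by rw [e1, e2]
        _ ≤ u * M + (1 - u) * M :=
            add_le_add (mul_le_mul_of_nonneg_left hd1 hu0)
              (mul_le_mul_of_nonneg_left hd2 (by linarith))
        _ = M := by ring
    · apply max_le
      · rw [← hj.dist_eq]
        rw [ContinuousMap.dist_le dist_nonneg]
        intro s
        have := ContinuousMap.dist_apply_le_dist (f := ι p) (g := ι q) ⟨((s : ℝ) + 1) / 2, hmem s⟩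
        rwa [hι1, hι1] at this
      · have := ContinuousMap.dist_apply_le_dist (f := ι p) (g := ι q) 0
        rwa [hι0, hι0, ← Subtype.dist_eq] at this
  refine ⟨ι, fun g => r (g 0), hiso, hiso.isClosedEmbedding.isClosed_range,
    hr.continuous.comp ((continuous_eval_const 0)), ?_, ?_⟩
  · intro g h
    calc dist (r (g 0)) (r (h 0)) ≤ dist (g 0) (h 0) := by
          simpa using hr.dist_le_mul (g 0) (h 0)
      _ ≤ dist g h := ContinuousMap.dist_apply_le_dist 0
  · intro x y
    show r (ι (x, y) 0) = y
    rw [hι0 (x, y), hry]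
end
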